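/- For every d ≥ 2, the closure of the union over all s ≥ 1 of the sets of s-unistochastic d×d matrices equals the full Birkhoff polytope of d×d bistochastic matrices. Equivalently, for any bistochastic matrix B and any ε > 0, there exist s ≥ 1 and an s-unistochastic matrix B' with ‖B − B'‖_F ≤ ε. -/

import Mathlib

/-- `B` is an `s`-unistochastic `d × d` matrix. -/
def IsSUnistochastic (d s : ℕ) (B : Matrix (Fin d) (Fin d) ℝ) : Prop :=
  ∃ U : Matrix (Fin d × Fin s) (Fin d × Fin s) ℂ,
    U ∈ Matrix.unitaryGroup (Fin d × Fin s) ℂ ∧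
    ∀ i j, B i j = (1 / (s : ℝ)) * ∑ k, ∑ l, ‖U (i, k) (j, l)‖ ^ 2

open Finset

/-- A uniform mixture of `s` permutation matrices is `s`-unistochastic. -/
lemma isSUnistochastic_of_perms (d s : ℕ) (g : Fin s → Equiv.Perm (Fin d)) :
    IsSUnistochastic d s
      (fun i j => (1 / (s : ℝ)) * ∑ l : Fin s, if g l i = j then 1 else 0) := by
  classical
  set π : (Fin d × Fin s) ≃ (Fin d × Fin s) :=
    { toFun := fun p => (g p.2 p.1, p.2)
      invFun := fun p => ((g p.2)⁻¹ p.1, p.2)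
      left_inv := fun p => by simp
      right_inv := fun p => by simp } with hπ
  refine ⟨fun p q => if q = π p then 1 else 0, ?_, ?_⟩
  · apply (Matrix.mem_unitaryGroup_iff (A := Matrix.of fun p q => if q = π p then (1:ℂ) else 0)).mpr
    ext p q
    simp only [Matrix.mul_apply, Matrix.star_apply, Matrix.of_apply]
    have hterm : ∀ r, (if r = π p then (1:ℂ) else 0) * star (if r = π q then (1:ℂ) else 0)
        = if r = π p then (if r = π q then 1 else 0) else 0 := by
      intro r; split_ifs <;> simp
    rw [Finset.sum_congr rfl fun r _ => hterm r, Finset.sum_ite_eq' univ (π p)]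
    simp [Matrix.one_apply, π.injective.eq_iff, eq_comm]
  · intro i j
    dsimp only
    congr 1
    have hterm : ∀ (k l : Fin s), ‖(if ((j, l) : Fin d × Fin s) = π (i, k) then (1:ℂ) else 0)‖ ^ 2
        = if ((j, l) : Fin d × Fin s) = π (i, k) then (1:ℝ) else 0 := by
      intro k l; split_ifs <;> simp
    have key : ∀ k : Fin s,
        (∑ l : Fin s, if ((j, l) : Fin d × Fin s) = π (i, k) then (1:ℝ) else 0)
          = if g k i = j then 1 else 0 := by
      intro k
      rw [Finset.sum_eq_single k]
      · rcases eq_or_ne (g k i) j with h | h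
        · simp [hπ, Prod.ext_iff, h]
        · simp [hπ, Prod.ext_iff, h, Ne.symm h]
      · intro l _ hl
        simp [hπ, Prod.ext_iff, hl]
      · simp
    have final : ∀ k : Fin s,
        (∑ l : Fin s, ‖(if ((j, l) : Fin d × Fin s) = π (i, k) then (1:ℂ) else 0)‖ ^ 2)
          = if g k i = j then (1:ℝ) else 0 := by
      intro k
      rw [Finset.sum_congr rfl fun l _ => hterm k l, key k]
    exact (Finset.sum_congr rfl fun k _ => final k).symm

/-- Distribute multiplicities `m` summing to `s` along `Fin s`. -/
lemma exists_assignment {α : Type*} [Fintype α] (m : α → ℕ) (s : ℕ)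
    (hs : ∑ a, m a = s) :
    ∃ g : Fin s → α, ∀ F : α → ℝ, ∑ l, F (g l) = ∑ a, (m a : ℝ) * F a := by
  classical
  have hcard : Fintype.card ((a : α) × Fin (m a)) = s := by
    simp [Fintype.card_sigma, hs]
  let e : Fin s ≃ (a : α) × Fin (m a) := (Fintype.equivFinOfCardEq hcard).symm
  refine ⟨fun l => (e l).1, fun F => ?_⟩
  rw [Equiv.sum_comp e (fun x => F x.1), ← Finset.univ_sigma_univ, Finset.sum_sigma]
  simp [Finset.sum_const, mul_comm]

/-- Rational rounding of a probability vector with common denominator `s`. -/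
lemma exists_rounding {α : Type*} [Fintype α] [Nonempty α] (w : α → ℝ)
    (hw0 : ∀ a, 0 ≤ w a) (hw1 : ∑ a, w a = 1) (s : ℕ) (hs : 1 ≤ s) :
    ∃ m : α → ℕ, ∑ a, m a = s ∧
      ∀ a, |w a - (m a : ℝ) / s| ≤ (Fintype.card α : ℝ) / s := by
  classical
  obtain ⟨a₀⟩ := ‹Nonempty α›
  set t : ℕ := ∑ a ∈ univ \ {a₀}, ⌊(s : ℝ) * w a⌋₊ with ht
  have hspos : (0:ℝ) < s := by exact_mod_cast hs
  have hfl_le : ∀ a, (⌊(s : ℝ) * w a⌋₊ : ℝ) ≤ (s : ℝ) * w a := fun a =>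
    Nat.floor_le (mul_nonneg hspos.le (hw0 a))
  have hfl_gt : ∀ a, (s : ℝ) * w a - 1 < (⌊(s : ℝ) * w a⌋₊ : ℝ) := by
    intro a
    have := Nat.lt_floor_add_one ((s : ℝ) * w a)
    linarith
  have hround0 : ∀ a, 0 ≤ w a - (⌊(s : ℝ) * w a⌋₊ : ℝ) / s := by
    intro a
    rw [sub_nonneg, div_le_iff₀ hspos]
    calc (⌊(s : ℝ) * w a⌋₊ : ℝ) ≤ (s:ℝ) * w a := hfl_le a
      _ = w a * s := mul_comm _ _
  have hround1 : ∀ a, w a - (⌊(s : ℝ) * w a⌋₊ : ℝ) / s ≤ 1 / s := by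
    intro a
    rw [sub_le_iff_le_add, ← add_div, le_div_iff₀ hspos]
    have := hfl_gt a
    nlinarith
  have hts : (t : ℝ) / s ≤ ∑ a ∈ univ \ {a₀}, w a := by
    have hsum : (t : ℝ) = ∑ a ∈ univ \ {a₀}, (⌊(s : ℝ) * w a⌋₊ : ℝ) := by
      rw [ht]; push_cast; ring
    rw [hsum, div_le_iff₀ hspos, Finset.sum_mul]
    refine Finset.sum_le_sum fun a _ => ?_
    have := hround0 a
    rw [sub_nonneg, div_le_iff₀ hspos] at this
    linarith [this]
  have hsum_le : ∑ a ∈ univ \ {a₀}, w a ≤ 1 := by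
    rw [← hw1]
    exact Finset.sum_le_sum_of_subset_of_nonneg (Finset.sdiff_subset) fun a _ _ => hw0 a
  have htsle : (t : ℝ) ≤ (s : ℝ) := by
    have h1 : (t : ℝ) / s ≤ 1 := le_trans hts hsum_le
    rw [div_le_one hspos] at h1
    linarith
  have htsle' : t ≤ s := by exact_mod_cast htsle
  have hcard1 : (1:ℝ) ≤ (Fintype.card α : ℝ) := by
    have := Fintype.card_pos (α := α); exact_mod_cast this
  refine ⟨Function.update (fun a => ⌊(s : ℝ) * w a⌋₊) a₀ (s - t), ?_, ?_⟩
  · rw [Finset.sum_update_of_mem (Finset.mem_univ a₀)]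
    rw [← ht]
    omega
  · intro a
    have hcs : (0:ℝ) ≤ (Fintype.card α : ℝ) / s := by positivity
    by_cases ha : a = a₀
    · subst ha
      rw [Function.update_self, Nat.cast_sub htsle']
      have hw0' : w a = 1 - ∑ a ∈ univ \ {a}, w a := by
        have hsd := Finset.sum_sdiff (Finset.subset_univ {a}) (f := w)
        simp only [Finset.sum_singleton] at hsd
        rw [← hw1, ← hsd]; ring
      set q : ℝ := ∑ a ∈ univ \ {a}, (w a - (⌊(s : ℝ) * w a⌋₊ : ℝ) / s) with hq
      have hqval : q = (∑ a ∈ univ \ {a}, w a) - (t : ℝ) / s := by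
        rw [hq, Finset.sum_sub_distrib, ht]
        push_cast
        rw [Finset.sum_div]
      have hq0 : 0 ≤ q := Finset.sum_nonneg fun a _ => hround0 a
      have hq1 : q ≤ (Fintype.card α : ℝ) / s := by
        calc q ≤ ∑ _a ∈ univ \ {a}, (1 / (s:ℝ)) := Finset.sum_le_sum fun a _ => hround1 a
          _ = ((univ \ {a}).card : ℝ) * (1 / (s:ℝ)) := by rw [Finset.sum_const]; simp [mul_comm]
          _ ≤ (Fintype.card α : ℝ) * (1 / (s:ℝ)) := by
              have : ((univ \ {a}).card : ℝ) ≤ (Fintype.card α : ℝ) := by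
                exact_mod_cast Finset.card_le_card (Finset.subset_univ _)
              have h1s : (0:ℝ) ≤ 1 / (s:ℝ) := by positivity
              nlinarith
          _ = (Fintype.card α : ℝ) / s := by ring
      have hkey : w a - ((s : ℝ) - t) / s = -q := by
        rw [hw0', hqval]
        field_simp
        ring
      rw [hkey, abs_neg, abs_of_nonneg hq0]
      exact hq1
    · rw [Function.update_of_ne ha]
      rw [abs_of_nonneg (hround0 a)]
      calc w a - (⌊(s : ℝ) * w a⌋₊ : ℝ) / s ≤ 1 / s := hround1 a
        _ ≤ (Fintype.card α : ℝ) / s := by gcongr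

theorem closure_union_is_birkhoff (d : ℕ) (hd : 2 ≤ d)
    (B : Matrix (Fin d) (Fin d) ℝ)
    (hBnonneg : ∀ i j, 0 ≤ B i j)
    (hBrow : ∀ i, ∑ j, B i j = 1)
    (hBcol : ∀ j, ∑ i, B i j = 1)
    (ε : ℝ) (hε : 0 < ε) :
    ∃ s : ℕ, 1 ≤ s ∧ ∃ B' : Matrix (Fin d) (Fin d) ℝ,
      IsSUnistochastic d s B' ∧
      Real.sqrt (∑ i, ∑ j, (B i j - B' i j) ^ 2) ≤ ε := by
  classical
  have hB : B ∈ doublyStochastic ℝ (Fin d) := by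
    rw [mem_doublyStochastic_iff_sum]
    exact ⟨hBnonneg, hBrow, hBcol⟩
  obtain ⟨w, hw0, hw1, hwB⟩ := exists_eq_sum_perm_of_mem_doublyStochastic hB
  set N : ℕ := Fintype.card (Equiv.Perm (Fin d)) with hN
  set s : ℕ := max 1 ⌈(d : ℝ) * N ^ 2 / ε⌉₊ with hsdef
  have hs1 : 1 ≤ s := le_max_left _ _
  have hspos : (0:ℝ) < s := by exact_mod_cast hs1
  obtain ⟨m, hmsum, hmapprox⟩ := exists_rounding w hw0 hw1 s hs1
  obtain ⟨g, hg⟩ := exists_assignment m s hmsum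
  refine ⟨s, hs1, fun i j => (1 / (s : ℝ)) * ∑ l : Fin s, if g l i = j then 1 else 0,
    isSUnistochastic_of_perms d s g, ?_⟩
  have hperm : ∀ (σ : Equiv.Perm (Fin d)) i j,
      σ.permMatrix ℝ i j = if σ i = j then 1 else 0 := by
    intro σ i j
    simp [Equiv.Perm.permMatrix, PEquiv.toMatrix_apply, Equiv.toPEquiv_apply]
  have hBij : ∀ i j, B i j = ∑ σ : Equiv.Perm (Fin d), w σ * (if σ i = j then 1 else 0) := by
    intro i j
    rw [← hwB]
    simp only [Finset.sum_apply, Matrix.sum_apply, Matrix.smul_apply, smul_eq_mul]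
    exact Finset.sum_congr rfl fun σ _ => by rw [hperm]
  have hentry : ∀ i j, |B i j - (1 / (s : ℝ)) * ∑ l : Fin s, if g l i = j then 1 else 0|
      ≤ (N : ℝ) ^ 2 / s := by
    intro i j
    have hB' : (1 / (s : ℝ)) * (∑ l : Fin s, if g l i = j then 1 else 0)
        = ∑ σ : Equiv.Perm (Fin d), ((m σ : ℝ) / s) * (if σ i = j then 1 else 0) := by
      rw [hg (fun σ => if σ i = j then 1 else 0), Finset.mul_sum]
      exact Finset.sum_congr rfl fun σ _ => by ring
    rw [hBij i j, hB', ← Finset.sum_sub_distrib]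
    calc |∑ σ : Equiv.Perm (Fin d),
            (w σ * (if σ i = j then 1 else 0) - (m σ : ℝ) / s * (if σ i = j then 1 else 0))|
        ≤ ∑ σ : Equiv.Perm (Fin d),
            |w σ * (if σ i = j then 1 else 0) - (m σ : ℝ) / s * (if σ i = j then 1 else 0)| :=
          Finset.abs_sum_le_sum_abs _ _
      _ ≤ ∑ _σ : Equiv.Perm (Fin d), (N : ℝ) / s := by
          refine Finset.sum_le_sum fun σ _ => ?_
          rw [← sub_mul, abs_mul]
          calc |w σ - (m σ : ℝ) / s| * |if σ i = j then (1:ℝ) else 0|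
              ≤ ((N:ℝ)/s) * 1 := by
                apply mul_le_mul (hmapprox σ) ?_ (abs_nonneg _) (by positivity)
                split_ifs <;> simp
            _ = (N:ℝ)/s := mul_one _
      _ = (N : ℝ) * ((N:ℝ)/s) := by rw [Finset.sum_const, Finset.card_univ]; simp [hN]
      _ = (N : ℝ) ^ 2 / s := by ring
  have hfrob : ∑ i, ∑ j, (B i j - (1 / (s : ℝ)) * ∑ l : Fin s, if g l i = j then 1 else 0) ^ 2
      ≤ (d : ℝ) ^ 2 * ((N : ℝ) ^ 2 / s) ^ 2 := by
    calc ∑ i, ∑ j, (B i j - (1 / (s : ℝ)) * ∑ l : Fin s, if g l i = j then 1 else 0) ^ 2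
        ≤ ∑ _i : Fin d, ∑ _j : Fin d, ((N : ℝ) ^ 2 / s) ^ 2 := by
          refine Finset.sum_le_sum fun i _ => Finset.sum_le_sum fun j _ => ?_
          rw [← sq_abs]
          exact pow_le_pow_left₀ (abs_nonneg _) (hentry i j) 2
      _ = (d : ℝ) ^ 2 * ((N : ℝ) ^ 2 / s) ^ 2 := by
          simp [Finset.sum_const, Finset.card_univ]; ring
  have hdN : (d : ℝ) * ((N : ℝ) ^ 2 / s) ≤ ε := by
    rw [mul_div_assoc']
    rw [div_le_iff₀ hspos]
    have hceil : (d : ℝ) * N ^ 2 / ε ≤ (⌈(d : ℝ) * N ^ 2 / ε⌉₊ : ℕ) := Nat.le_ceil _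
    have hsge : ((⌈(d : ℝ) * N ^ 2 / ε⌉₊ : ℕ) : ℝ) ≤ (s : ℝ) := by
      have h : ⌈(d : ℝ) * N ^ 2 / ε⌉₊ ≤ s := le_max_right _ _
      exact_mod_cast h
    have h2 : (d : ℝ) * N ^ 2 / ε ≤ s := le_trans hceil hsge
    rw [div_le_iff₀ hε] at h2
    linarith
  calc Real.sqrt (∑ i, ∑ j, (B i j - (1 / (s : ℝ)) * ∑ l : Fin s, if g l i = j then 1 else 0) ^ 2)
      ≤ Real.sqrt ((d : ℝ) ^ 2 * ((N : ℝ) ^ 2 / s) ^ 2) := Real.sqrt_le_sqrt hfrob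
    _ = (d : ℝ) * ((N : ℝ) ^ 2 / s) := by
        rw [show (d : ℝ) ^ 2 * ((N : ℝ) ^ 2 / s) ^ 2 = ((d : ℝ) * ((N : ℝ) ^ 2 / s)) ^ 2 by ring,
          Real.sqrt_sq (by positivity)]
    _ ≤ ε := hdN
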